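/- Let A → B be a ring homomorphism whose set of pseudo-integral closures of A in B is non-empty. Then this set is directed under inclusion, and the integral closure B^ic of A in B is the union of all pseudo-integral closures of A in B. -/

import Mathlib

/-!
STATEMENT 6: If the set of pseudo-integral closures of `A` in `B` is non-empty then it is
directed under inclusion and its union is the integral closure of `A` in `B`.
-/

open IsLocalRing in
/-- The induced map on residue fields at a prime `q ⊆ B` and its preimage `φ⁻¹(q) ⊆ A`. -/
noncomputable def residueFieldHom {A B : Type*} [CommRing A] [CommRing B] (φ : A →+* B)
    (q : Ideal B) [q.IsPrime] :
    ResidueField (Localization.AtPrime (q.comap φ)) →+* ResidueField (Localization.AtPrime q) :=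
  letI := Localization.isLocalHom_localRingHom (q.comap φ) q φ rfl
  ResidueField.map (Localization.localRingHom (q.comap φ) q φ rfl)

/-- A pseudo-integral closure of `A` in `B`: an `A`-subalgebra `C` of the integral closure
`B^ic` of `A` in `B` which is finitely generated as an `A`-module and such that
`Spec(B^ic) → Spec(C)` is a bijection inducing isomorphisms on all residue fields. -/
def IsPseudoIntegralClosure {A B : Type*} [CommRing A] [CommRing B] [Algebra A B]
    (C : Subalgebra A B) : Prop :=
  ∃ hle : C ≤ integralClosure A B,
    Module.Finite A C ∧
    Function.Bijective (PrimeSpectrum.comap (Subalgebra.inclusion hle).toRingHom) ∧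
    ∀ (q : Ideal (integralClosure A B)) (_ : q.IsPrime),
      letI := ‹q.IsPrime›
      Function.Bijective (residueFieldHom (Subalgebra.inclusion hle).toRingHom q)

open IsLocalRing in
lemma residueFieldHom_comp {R S T : Type*} [CommRing R] [CommRing S] [CommRing T]
    (f : R →+* S) (g : S →+* T) (q : Ideal T) [q.IsPrime] :
    residueFieldHom (g.comp f) q =
      (residueFieldHom g q).comp (residueFieldHom f (q.comap g)) := by
  unfold residueFieldHom
  letI := Localization.isLocalHom_localRingHom (q.comap g) q g rfl
  letI := Localization.isLocalHom_localRingHom ((q.comap g).comap f) (q.comap g) f rfl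
  letI := Localization.isLocalHom_localRingHom (q.comap (g.comp f)) q (g.comp f) rfl
  have hloc : Localization.localRingHom (q.comap (g.comp f)) q (g.comp f) rfl =
      (Localization.localRingHom (q.comap g) q g rfl).comp
        (Localization.localRingHom ((q.comap g).comap f) (q.comap g) f rfl) := by
    refine Localization.localRingHom_unique _ _ _ _ fun x => ?_
    show Localization.localRingHom (q.comap g) q g rfl
        (Localization.localRingHom ((q.comap g).comap f) (q.comap g) f rfl
          (algebraMap R (Localization.AtPrime ((q.comap g).comap f)) x)) = _
    rw [Localization.localRingHom_to_map, Localization.localRingHom_to_map]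
    rfl
  refine RingHom.ext fun x => ?_
  obtain ⟨y, rfl⟩ := residue_surjective x
  show ResidueField.map (Localization.localRingHom (q.comap (g.comp f)) q (g.comp f) rfl)
      (residue _ y)
    = ResidueField.map (Localization.localRingHom (q.comap g) q g rfl)
        (ResidueField.map (Localization.localRingHom ((q.comap g).comap f) (q.comap g) f rfl)
          (residue (Localization.AtPrime ((q.comap g).comap f)) y))
  rw [ResidueField.map_residue, hloc]
  rfl

lemma isPseudo_of_le {A B : Type*} [CommRing A] [CommRing B] [Algebra A B]
    {C D : Subalgebra A B} (hC : IsPseudoIntegralClosure C) (hCD : C ≤ D)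
    (hle : D ≤ integralClosure A B) (hfin : Module.Finite A D) :
    IsPseudoIntegralClosure D := by
  obtain ⟨hleC, _hfinC, hbij, hres⟩ := hC
  have hcomp : (Subalgebra.inclusion hleC).toRingHom =
      (Subalgebra.inclusion hle).toRingHom.comp (Subalgebra.inclusion hCD).toRingHom :=
    RingHom.ext fun x => rfl
  refine ⟨hle, hfin, ⟨?_, ?_⟩, ?_⟩
  · -- injective
    intro x y hxy
    apply hbij.1
    rw [hcomp, PrimeSpectrum.comap_comp]
    simp only [ContinuousMap.coe_comp, Function.comp_apply, hxy]
  · -- surjective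
    letI : Algebra D (integralClosure A B) := (Subalgebra.inclusion hle).toRingHom.toAlgebra
    haveI : IsScalarTower A D (integralClosure A B) :=
      IsScalarTower.of_algebraMap_eq fun a => rfl
    haveI : Algebra.IsIntegral D (integralClosure A B) :=
      ⟨fun x => IsIntegral.tower_top (A := D) (integralClosure.isIntegral x)⟩
    intro p
    obtain ⟨Q, -, hQprime, hQcomap⟩ :=
      Ideal.exists_ideal_over_prime_of_isIntegral (R := D) (S := integralClosure A B)
        p.asIdeal ⊥ (by
          intro x hx
          have h0 : (Subalgebra.inclusion hle) x = 0 := Ideal.mem_bot.mp hx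
          have hx0 : x = 0 :=
            Subalgebra.inclusion_injective hle (h0.trans (map_zero _).symm)
          exact hx0 ▸ p.asIdeal.zero_mem)
    exact ⟨⟨Q, hQprime⟩, PrimeSpectrum.ext hQcomap⟩
  · -- residue fields
    intro q hq
    letI := hq
    have hmain : Function.Bijective
        (residueFieldHom ((Subalgebra.inclusion hle).toRingHom.comp
          (Subalgebra.inclusion hCD).toRingHom) q) := hres q hq
    rw [residueFieldHom_comp] at hmain
    constructor
    · exact RingHom.injective _
    · intro y
      obtain ⟨x, hx⟩ := hmain.2 y
      exact ⟨residueFieldHom (Subalgebra.inclusion hCD).toRingHom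
        (q.comap (Subalgebra.inclusion hle).toRingHom) x, hx⟩

theorem pseudoIntegralClosures_directed_and_union_eq_integralClosure
    {A B : Type*} [CommRing A] [CommRing B] [Algebra A B]
    (h : ∃ C : Subalgebra A B, IsPseudoIntegralClosure C) :
    DirectedOn (· ≤ ·) {C : Subalgebra A B | IsPseudoIntegralClosure C} ∧
      ∀ b : B, b ∈ integralClosure A B ↔
        ∃ C : Subalgebra A B, IsPseudoIntegralClosure C ∧ b ∈ C := by
  obtain ⟨C₀, hC₀⟩ := h
  constructor
  · rintro C₁ h₁ C₂ h₂
    obtain ⟨hle₁, hfin₁, -, -⟩ := id h₁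
    obtain ⟨hle₂, hfin₂, -, -⟩ := id h₂
    haveI := hfin₁; haveI := hfin₂
    haveI := Subalgebra.finite_sup C₁ C₂
    exact ⟨C₁ ⊔ C₂,
      isPseudo_of_le h₁ le_sup_left (sup_le hle₁ hle₂) inferInstance,
      le_sup_left, le_sup_right⟩
  · intro b
    constructor
    · intro hb
      obtain ⟨hle₀, hfin₀, -, -⟩ := id hC₀
      haveI := hfin₀
      haveI : Module.Finite A (Algebra.adjoin A {b}) :=
        Module.Finite.iff_fg.mpr (IsIntegral.fg_adjoin_singleton hb)
      haveI := Subalgebra.finite_sup C₀ (Algebra.adjoin A {b})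
      exact ⟨C₀ ⊔ Algebra.adjoin A {b},
        isPseudo_of_le hC₀ le_sup_left
          (sup_le hle₀ (Algebra.adjoin_le (Set.singleton_subset_iff.mpr hb))) inferInstance,
        Algebra.mem_sup_right (Algebra.subset_adjoin rfl)⟩
    · rintro ⟨C, hC, hbC⟩
      obtain ⟨hle, -, -, -⟩ := hC
      exact hle hbC
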